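/- Let r ≥ 1 and consider the ℝ[x,y]-module homomorphism φ : ℝ[x,y]^3 → ℝ[x,y] sending the standard basis vectors to x^{r+1}, (x+y)^{r+1}, and y^{r+1} respectively. Then the kernel of φ is a free ℝ[x,y]-module of rank 2. -/

import Mathlib

open MvPolynomial

/-- The `ℝ[x,y]`-module homomorphism `ℝ[x,y]³ → ℝ[x,y]` sending the standard basis
vectors to `x^(r+1)`, `(x+y)^(r+1)` and `y^(r+1)` respectively. -/
noncomputable def phi (r : ℕ) :
    (Fin 3 → MvPolynomial (Fin 2) ℝ) →ₗ[MvPolynomial (Fin 2) ℝ]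
      MvPolynomial (Fin 2) ℝ where
  toFun f := f 0 * X 0 ^ (r + 1) + f 1 * (X 0 + X 1) ^ (r + 1) + f 2 * X 1 ^ (r + 1)
  map_add' f g := by
    simp only [Pi.add_apply]
    ring
  map_smul' c f := by
    simp only [Pi.smul_apply, smul_eq_mul, RingHom.id_apply]
    ring


open Finset

/-- `(-1)^(a-b) = (-1)^a * (-1)^b` for `b ≤ a`. -/
lemma neg_one_pow_sub_eq (a b : ℕ) (h : b ≤ a) : (-1:ℝ)^(a-b) = (-1)^a * (-1)^b := by
  have h1 : (-1:ℝ)^(2*b) = 1 := by rw [pow_mul]; norm_num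
  calc (-1:ℝ)^(a-b) = (-1)^(a-b) * (-1)^(2*b) := by rw [h1, mul_one]
  _ = (-1)^(a-b+2*b) := (pow_add _ _ _).symm
  _ = (-1)^(a+b) := by congr 1; omega
  _ = (-1)^a * (-1)^b := pow_add _ _ _

/-- Trinomial revision. -/
lemma trinom (N A B : ℕ) :
    ((N.choose A : ℝ)) * ((N - A).choose B) = (N.choose B) * ((N - B).choose A) := by
  rcases le_or_gt A N with hA | hA
  · rcases le_or_gt B (N - A) with hB | hB
    · have hBN : B ≤ N := le_trans hB (Nat.sub_le _ _)
      have hA' : A ≤ N - B := by omega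
      rw [Nat.cast_choose ℝ hA, Nat.cast_choose ℝ hB, Nat.cast_choose ℝ hBN,
        Nat.cast_choose ℝ hA']
      have e1 : N - A - B = N - B - A := by omega
      rw [e1]
      have f0 : (Nat.factorial A : ℝ) ≠ 0 := by positivity
      have f1 : (Nat.factorial B : ℝ) ≠ 0 := by positivity
      have f2 : (Nat.factorial (N-A) : ℝ) ≠ 0 := by positivity
      have f3 : (Nat.factorial (N-B) : ℝ) ≠ 0 := by positivity
      have f4 : (Nat.factorial (N-B-A) : ℝ) ≠ 0 := by positivity
      field_simp
    · rw [Nat.choose_eq_zero_of_lt hB]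
      rcases le_or_gt B N with h2 | h2
      · have h3 : N - B < A := by omega
        rw [Nat.choose_eq_zero_of_lt h3]
        simp
      · rw [Nat.choose_eq_zero_of_lt h2]
        simp
  · rw [Nat.choose_eq_zero_of_lt hA]
    have h3 : N - B < A := lt_of_le_of_lt (Nat.sub_le _ _) hA
    rw [Nat.choose_eq_zero_of_lt h3]
    simp

/-- `∑ (-1)^u C(M,u) (1+X)^(M-u) = X^M`. -/
lemma sum_pow_neg_one (M : ℕ) :
    ∑ u ∈ range (M+1),
      Polynomial.C ((-1:ℝ)^u * (M.choose u : ℝ)) * (1 + Polynomial.X)^(M-u)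
      = Polynomial.X ^ M := by
  have h : (-1 : Polynomial ℝ) + (1 + Polynomial.X) = Polynomial.X := by ring
  rw [← h, add_pow]
  refine Finset.sum_congr rfl ?_
  intro u hu
  push_cast [map_mul, map_pow, map_neg, map_one, Polynomial.C_eq_natCast]
  ring

/-- Key vanishing/value lemma (Vandermonde with alternating signs). -/
lemma star (M N q : ℕ) (h : M ≤ N) :
    ∑ u ∈ range (M+1), (-1:ℝ)^u * (M.choose u) * ((N-u).choose q)
      = if M ≤ q then (((N-M).choose (q-M) : ℝ)) else 0 := by
  have key : ∑ u ∈ range (M+1),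
      Polynomial.C ((-1:ℝ)^u * (M.choose u : ℝ)) * (1 + Polynomial.X)^(N-u)
      = Polynomial.X ^ M * (1 + Polynomial.X)^(N-M) := by
    have hterm : ∀ u ∈ range (M+1),
        Polynomial.C ((-1:ℝ)^u * (M.choose u : ℝ)) * (1 + Polynomial.X)^(N-u)
        = (Polynomial.C ((-1:ℝ)^u * (M.choose u : ℝ)) * (1 + Polynomial.X)^(M-u))
            * (1 + Polynomial.X)^(N-M) := by
      intro u hu
      simp only [mem_range] at hu
      have : N - u = (M-u) + (N-M) := by omega
      rw [this, pow_add]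
      ring
    rw [Finset.sum_congr rfl hterm, ← Finset.sum_mul, sum_pow_neg_one]
  have hc := congrArg (fun P => Polynomial.coeff P q) key
  simp only [Polynomial.finset_sum_coeff, Polynomial.coeff_C_mul,
    Polynomial.coeff_one_add_X_pow] at hc
  rw [hc]
  rw [mul_comm (Polynomial.X ^ M) _, Polynomial.coeff_mul_X_pow']
  by_cases hMq : M ≤ q
  · rw [if_pos hMq, if_pos hMq, Polynomial.coeff_one_add_X_pow]
  · rw [if_neg hMq, if_neg hMq]

/-- alternating geometric-like polynomial -/
noncomputable def Gpoly (M : ℕ) : Polynomial ℝ :=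
  ∑ j ∈ range (M+1), Polynomial.C ((-1:ℝ)^(M-j)) * Polynomial.X ^ j

lemma Gpoly_mul (M : ℕ) :
    (1 + Polynomial.X) * Gpoly M
      = Polynomial.X ^ (M+1) - Polynomial.C ((-1:ℝ)^(M+1)) := by
  induction M with
  | zero => simp [Gpoly]; ring
  | succ M ih =>
    have hG : Gpoly (M+1) = Polynomial.X ^ (M+1) - Gpoly M := by
      rw [Gpoly, Finset.sum_range_succ]
      have : ∀ j ∈ range (M+1),
          Polynomial.C ((-1:ℝ)^(M+1-j)) * Polynomial.X ^ j
          = - (Polynomial.C ((-1:ℝ)^(M-j)) * Polynomial.X ^ j) := by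
        intro j hj
        simp only [mem_range] at hj
        have : M+1-j = (M-j)+1 := by omega
        rw [this, pow_succ, map_mul]
        simp only [map_neg, map_one]
        ring
      rw [Finset.sum_congr rfl this, Finset.sum_neg_distrib]
      simp [Gpoly]
      ring
    rw [hG, mul_sub, ih]
    have : (-1:ℝ)^(M+1+1) = -((-1:ℝ)^(M+1)) := by rw [pow_succ]; ring
    rw [this]
    push_cast [map_neg]
    ring

lemma lemJ (M q : ℕ) (h : q ≤ M) :
    ∑ u ∈ range (M+1), (-1:ℝ)^u * ((M+1).choose u) * ((M-u).choose q)
      = (-1:ℝ)^(M-q) := by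
  -- S = ∑ u C((-1)^u C(M+1,u)) (1+X)^(M-u)
  set S : Polynomial ℝ :=
    ∑ u ∈ range (M+1), Polynomial.C ((-1:ℝ)^u * ((M+1).choose u : ℝ)) * (1+Polynomial.X)^(M-u)
    with hS
  have hmulS : (1 + Polynomial.X) * S
      = Polynomial.X ^ (M+1) - Polynomial.C ((-1:ℝ)^(M+1)) := by
    rw [hS, Finset.mul_sum]
    have hterm : ∀ u ∈ range (M+1),
        (1+Polynomial.X) * (Polynomial.C ((-1:ℝ)^u * ((M+1).choose u : ℝ)) * (1+Polynomial.X)^(M-u))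
        = Polynomial.C ((-1:ℝ)^u * ((M+1).choose u : ℝ)) * (1+Polynomial.X)^(M+1-u) := by
      intro u hu
      simp only [mem_range] at hu
      have : M+1-u = (M-u)+1 := by omega
      rw [this, pow_succ]
      ring
    rw [Finset.sum_congr rfl hterm]
    have htot := sum_pow_neg_one (M+1)
    rw [Finset.sum_range_succ] at htot
    have : Polynomial.C ((-1:ℝ)^(M+1) * (((M+1).choose (M+1)) : ℝ)) * (1+Polynomial.X)^(M+1-(M+1))
        = Polynomial.C ((-1:ℝ)^(M+1)) := by
      simp
    rw [this] at htot
    linear_combination htot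
  have hcancel : S = Gpoly M := by
    have hne : (1 + Polynomial.X : Polynomial ℝ) ≠ 0 := by
      intro hcon
      have := congrArg (fun P => Polynomial.coeff P 0) hcon
      simp at this
    apply mul_left_cancel₀ hne
    rw [hmulS, Gpoly_mul]
  have hc := congrArg (fun P => Polynomial.coeff P q) hcancel
  simp only [hS, Polynomial.finset_sum_coeff, Polynomial.coeff_C_mul,
    Polynomial.coeff_one_add_X_pow, Gpoly] at hc
  rw [hc]
  rw [Finset.sum_eq_single q]
  · simp
  · intro b hb hbq
    rw [Polynomial.coeff_X_pow, if_neg (by omega)]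
    simp
  · intro hq
    exact absurd (Finset.mem_range.mpr (by omega)) hq

/-! ### Construction of explicit syzygies -/

namespace Syz

/-- Padé-type coefficients. -/
noncomputable def ww (p q d : ℕ) : ℝ :=
  (-1)^d * ((q+d).choose d) * ((p+2*q+1).choose (q-d))

/-- coefficients of `B(t)(1+t)^n`. -/
noncomputable def dd (p q i : ℕ) : ℝ :=
  ∑ d ∈ Finset.range (q+1), ww p q d * ((p+q+1+d).choose i)

lemma dd_eq (p q i : ℕ) (hi : i ≤ p + q) :
    dd p q i = ((p+2*q+1).choose i : ℝ) * (-1:ℝ)^q *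
      ∑ u ∈ Finset.range (q+1),
        (-1:ℝ)^u * ((p+2*q+1-i).choose u : ℝ) * ((2*q-u).choose q : ℝ) := by
  unfold dd ww
  have hterm : ∀ d ∈ Finset.range (q+1),
      (-1:ℝ)^d * ((q+d).choose d) * ((p+2*q+1).choose (q-d)) * ((p+q+1+d).choose i)
      = (-1:ℝ)^d * ((q+d).choose d) * (((p+2*q+1).choose i) * (((p+2*q+1-i).choose (q-d)))) := by
    intro d hd
    simp only [Finset.mem_range] at hd
    have h1 : p+2*q+1 - (q-d) = p+q+1+d := by omega
    have := trinom (p+2*q+1) (q-d) i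
    rw [h1] at this
    rw [mul_assoc, mul_assoc, this]
    ring
  rw [Finset.sum_congr rfl hterm]
  rw [← Finset.sum_range_reflect]
  rw [Finset.mul_sum]
  refine Finset.sum_congr rfl ?_
  intro u hu
  simp only [Finset.mem_range] at hu
  have h1 : q + 1 - 1 - u = q - u := by omega
  rw [h1]
  have h2 : q - (q - u) = u := by omega
  rw [h2]
  have h3 : q + (q-u) = 2*q - u := by omega
  rw [h3]
  have h4 : ((2*q-u).choose (q-u) : ℝ) = ((2*q-u).choose q : ℝ) := by
    have : (2*q-u) - q = q - u := by omega
    rw [← this, Nat.choose_symm (by omega)]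
  rw [h4, neg_one_pow_sub_eq q u (by omega)]
  ring

lemma dd_mid (p q i : ℕ) (h1 : p < i) (h2 : i < p+q+1) : dd p q i = 0 := by
  have hq : 1 ≤ q := by omega
  rw [dd_eq p q i (by omega)]
  have hext : ∑ u ∈ Finset.range (q+1),
      (-1:ℝ)^u * ((p+2*q+1-i).choose u : ℝ) * ((2*q-u).choose q : ℝ)
      = ∑ u ∈ Finset.range ((p+2*q+1-i)+1),
        (-1:ℝ)^u * ((p+2*q+1-i).choose u : ℝ) * ((2*q-u).choose q : ℝ) := by
    apply Finset.sum_subset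
    · apply Finset.range_subset_range.mpr; omega
    · intro u hu hnu
      simp only [Finset.mem_range] at hu hnu
      have : 2*q - u < q := by omega
      rw [Nat.choose_eq_zero_of_lt this]
      simp
  rw [hext, star (p+2*q+1-i) (2*q) q (by omega), if_neg (by omega)]
  simp

lemma dd_p (p q : ℕ) : dd p q p = ((p+2*q+1).choose p : ℝ) := by
  rw [dd_eq p q p (by omega)]
  have hM : p+2*q+1-p = 2*q+1 := by omega
  rw [hM]
  have hext : ∑ u ∈ Finset.range (q+1),
      (-1:ℝ)^u * ((2*q+1).choose u : ℝ) * ((2*q-u).choose q : ℝ)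
      = ∑ u ∈ Finset.range (2*q+1),
        (-1:ℝ)^u * ((2*q+1).choose u : ℝ) * ((2*q-u).choose q : ℝ) := by
    apply Finset.sum_subset
    · apply Finset.range_subset_range.mpr; omega
    · intro u hu hnu
      simp only [Finset.mem_range] at hu hnu
      have : 2*q - u < q := by omega
      rw [Nat.choose_eq_zero_of_lt this]
      simp
  have hJ := lemJ (2*q) q (by omega)
  rw [hext, hJ]
  have : 2*q - q = q := by omega
  rw [this, mul_assoc, ← pow_add]
  have h2 : (-1:ℝ)^(q+q) = 1 := by
    rw [← two_mul, pow_mul]; norm_num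
  rw [h2, mul_one]

end Syz
section Part3
open MvPolynomial Finset Syz

local notation "R2" => MvPolynomial (Fin 2) ℝ

namespace Syz

noncomputable def sA (p q e : ℕ) : R2 :=
  ∑ j ∈ Finset.range (q+1), C (dd p q (p+q+1+j)) * X 0 ^ j * X 1 ^ (e-j)

noncomputable def sB (p q e : ℕ) : R2 :=
  ∑ d ∈ Finset.range (q+1), C (ww p q d) * (X 0 + X 1) ^ d * X 1 ^ (e-d)

noncomputable def sC (p q e : ℕ) : R2 :=
  ∑ j ∈ Finset.range (p+1), C (dd p q j) * X 0 ^ j * X 1 ^ (e-j)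

lemma syz (p q e : ℕ) (hp : p ≤ e) (hq : q ≤ e) :
    sB p q e * (X 0 + X 1)^(p+q+1)
      = sA p q e * X 0^(p+q+1) + sC p q e * X 1^(p+q+1) := by
  have expand : sB p q e * (X 0 + X 1)^(p+q+1)
      = ∑ d ∈ Finset.range (q+1), ∑ i ∈ Finset.range (p+q+1+q+1),
          C (ww p q d * ((p+q+1+d).choose i)) * X 0^i * X 1^(p+q+1+e-i) := by
    rw [sB, Finset.sum_mul]
    refine Finset.sum_congr rfl ?_
    intro d hd
    simp only [Finset.mem_range] at hd
    calc C (ww p q d) * (X 0 + X 1)^d * X 1^(e-d) * (X 0 + X 1)^(p+q+1)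
        = C (ww p q d) * (X 0 + X 1)^(p+q+1+d) * X 1^(e-d) := by
          rw [pow_add]; ring
      _ = ∑ i ∈ Finset.range (p+q+1+d+1),
            C (ww p q d) * (X 0^i * X 1^(p+q+1+d-i) * ((p+q+1+d).choose i : R2)) * X 1^(e-d) := by
          rw [add_pow, Finset.mul_sum, Finset.sum_mul]
      _ = ∑ i ∈ Finset.range (p+q+1+d+1),
            C (ww p q d * ((p+q+1+d).choose i)) * X 0^i * X 1^(p+q+1+e-i) := by
          refine Finset.sum_congr rfl ?_
          intro i hi
          simp only [Finset.mem_range] at hi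
          have h3 : p+q+1+e-i = (p+q+1+d-i) + (e-d) := by omega
          rw [h3, pow_add, map_mul, ← map_natCast (C : ℝ →+* R2)]
          ring
      _ = ∑ i ∈ Finset.range (p+q+1+q+1),
            C (ww p q d * ((p+q+1+d).choose i)) * X 0^i * X 1^(p+q+1+e-i) := by
          apply Finset.sum_subset
          · apply Finset.range_subset_range.mpr; omega
          · intro i hi hni
            simp only [Finset.mem_range] at hi hni
            rw [Nat.choose_eq_zero_of_lt (by omega)]
            simp
  rw [expand, Finset.sum_comm]
  have inner : ∀ i ∈ Finset.range (p+q+1+q+1),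
      (∑ d ∈ Finset.range (q+1),
        (C (ww p q d * ((p+q+1+d).choose i)) * X 0^i * X 1^(p+q+1+e-i) : R2))
      = (C (dd p q i) * X 0^i * X 1^(p+q+1+e-i) : R2) := by
    intro i _
    rw [dd, map_sum, Finset.sum_mul, Finset.sum_mul]
  calc ∑ i ∈ Finset.range (p+q+1+q+1), ∑ d ∈ Finset.range (q+1),
          (C (ww p q d * ((p+q+1+d).choose i)) * X 0^i * X 1^(p+q+1+e-i) : R2)
      = ∑ i ∈ Finset.range (p+q+1+q+1),
          (C (dd p q i) * X 0^i * X 1^(p+q+1+e-i) : R2) := Finset.sum_congr rfl inner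
    _ = sA p q e * X 0^(p+q+1) + sC p q e * X 1^(p+q+1) := ?_
  have hsplit1 : Finset.range (p+q+1+q+1)
      = Finset.range (p+q+1) ∪ Finset.Ico (p+q+1) (p+q+1+q+1) := by
    rw [Finset.range_eq_Ico, Finset.range_eq_Ico]
    exact (Finset.Ico_union_Ico_eq_Ico (by omega) (by omega)).symm
  have hsplit2 : Finset.range (p+q+1)
      = Finset.range (p+1) ∪ Finset.Ico (p+1) (p+q+1) := by
    rw [Finset.range_eq_Ico, Finset.range_eq_Ico]
    exact (Finset.Ico_union_Ico_eq_Ico (by omega) (by omega)).symm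
  have hdisj1 : Disjoint (Finset.range (p+q+1)) (Finset.Ico (p+q+1) (p+q+1+q+1)) := by
    rw [Finset.range_eq_Ico]
    exact Finset.Ico_disjoint_Ico_consecutive 0 (p+q+1) (p+q+1+q+1)
  have hdisj2 : Disjoint (Finset.range (p+1)) (Finset.Ico (p+1) (p+q+1)) := by
    rw [Finset.range_eq_Ico]
    exact Finset.Ico_disjoint_Ico_consecutive 0 (p+1) (p+q+1)
  have hmid : ∑ i ∈ Finset.Ico (p+1) (p+q+1),
      (C (dd p q i) * X 0^i * X 1^(p+q+1+e-i) : R2) = 0 := by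
    apply Finset.sum_eq_zero
    intro i hi
    simp only [Finset.mem_Ico] at hi
    rw [dd_mid p q i (by omega) (by omega)]
    simp
  have hC : ∑ i ∈ Finset.range (p+1), (C (dd p q i) * X 0^i * X 1^(p+q+1+e-i) : R2)
      = sC p q e * X 1^(p+q+1) := by
    rw [sC, Finset.sum_mul]
    refine Finset.sum_congr rfl ?_
    intro i hi
    simp only [Finset.mem_range] at hi
    have h3 : p+q+1+e-i = (e-i) + (p+q+1) := by omega
    rw [h3, pow_add]
    ring
  have hA : ∑ i ∈ Finset.Ico (p+q+1) (p+q+1+q+1),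
      (C (dd p q i) * X 0^i * X 1^(p+q+1+e-i) : R2) = sA p q e * X 0^(p+q+1) := by
    rw [Finset.sum_Ico_eq_sum_range]
    have h4 : p+q+1+q+1 - (p+q+1) = q+1 := by omega
    rw [h4, sA, Finset.sum_mul]
    refine Finset.sum_congr rfl ?_
    intro j hj
    simp only [Finset.mem_range] at hj
    have h5 : p+q+1+e-(p+q+1+j) = e - j := by omega
    rw [h5]
    have h6 : (X 0 : R2) ^ (p+q+1+j) = X 0 ^ j * X 0 ^ (p+q+1) := by
      rw [← pow_add]; congr 1; omega
    rw [h6]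
    ring
  rw [hsplit1, Finset.sum_union hdisj1, hsplit2, Finset.sum_union hdisj2, hmid, add_zero,
    hC, hA, add_comm]

end Syz
end Part3
section Part4
open MvPolynomial Finset

local notation "R2" => MvPolynomial (Fin 2) ℝ

namespace Syz

/-- the evaluation point (1,0) -/
noncomputable def pt : Fin 2 → ℝ := ![1, 0]

@[simp] lemma pt_zero : pt 0 = 1 := rfl
@[simp] lemma pt_one : pt 1 = 0 := rfl

lemma ev_sC_p (p q : ℕ) : eval pt (sC p q p) = ((p+2*q+1).choose p : ℝ) := by
  rw [sC, map_sum]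
  rw [Finset.sum_eq_single p]
  · simp [dd_p]
  · intro j hj hjp
    simp only [Finset.mem_range] at hj
    simp only [map_mul, map_pow, eval_C, eval_X, pt_zero, pt_one]
    rw [zero_pow (by omega)]
    ring
  · intro h
    exact absurd (Finset.mem_range.mpr (by omega)) h

lemma ev_sC_zero (p q e : ℕ) (h : p < e) : eval pt (sC p q e) = 0 := by
  rw [sC, map_sum]
  apply Finset.sum_eq_zero
  intro j hj
  simp only [Finset.mem_range] at hj
  simp only [map_mul, map_pow, eval_C, eval_X, pt_zero, pt_one]
  rw [zero_pow (by omega)]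
  ring

lemma ev_sB_q (p q : ℕ) : eval pt (sB p q q) = (-1)^q * ((2*q).choose q : ℝ) := by
  rw [sB, map_sum]
  rw [Finset.sum_eq_single q]
  · simp only [map_mul, map_pow, eval_C, eval_X, map_add, pt_zero, pt_one]
    rw [ww]
    have : q + q = 2 * q := by omega
    simp [this]
  · intro d hd hdq
    simp only [Finset.mem_range] at hd
    simp only [map_mul, map_pow, eval_C, eval_X, map_add, pt_zero, pt_one]
    rw [zero_pow (by omega)]
    ring
  · intro h
    exact absurd (Finset.mem_range.mpr (by omega)) h

lemma td_mono (a : ℝ) (u v : ℕ) : ((C a : R2) * X 0 ^ u * X 1 ^ v).totalDegree ≤ u + v := by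
  refine (totalDegree_mul _ _).trans ?_
  have h1 : ((C a : R2) * X 0 ^ u).totalDegree ≤ u := by
    refine (totalDegree_mul _ _).trans ?_
    rw [totalDegree_C, totalDegree_X_pow]
    omega
  have h2 : ((X 1 : R2) ^ v).totalDegree ≤ v := by
    rw [totalDegree_X_pow]
  omega

lemma td_sA (p q e : ℕ) (hq : q ≤ e) : (sA p q e).totalDegree ≤ e := by
  refine (totalDegree_finset_sum _ _).trans ?_
  apply Finset.sup_le
  intro j hj
  simp only [Finset.mem_range] at hj
  exact (td_mono _ j (e-j)).trans (by omega)

lemma td_sC (p q e : ℕ) (hp : p ≤ e) : (sC p q e).totalDegree ≤ e := by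
  refine (totalDegree_finset_sum _ _).trans ?_
  apply Finset.sup_le
  intro j hj
  simp only [Finset.mem_range] at hj
  exact (td_mono _ j (e-j)).trans (by omega)

lemma td_sB (p q e : ℕ) (hq : q ≤ e) : (sB p q e).totalDegree ≤ e := by
  refine (totalDegree_finset_sum _ _).trans ?_
  apply Finset.sup_le
  intro d hd
  simp only [Finset.mem_range] at hd
  refine (totalDegree_mul _ _).trans ?_
  have h1 : ((C (ww p q d) : R2) * (X 0 + X 1) ^ d).totalDegree ≤ d := by
    refine (totalDegree_mul _ _).trans ?_
    have : ((X 0 + X 1 : R2) ^ d).totalDegree ≤ d := by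
      refine (totalDegree_pow _ _).trans ?_
      have : (X 0 + X 1 : R2).totalDegree ≤ 1 := by
        refine (totalDegree_add _ _).trans ?_
        rw [totalDegree_X, totalDegree_X]
        omega
      nlinarith [this]
    rw [totalDegree_C]
    omega
  have h2 : ((X 1 : R2) ^ (e-d)).totalDegree ≤ e - d := by rw [totalDegree_X_pow]
  omega

/-- a nonzero polynomial whose product with `X 0 ^ n` has total degree `≤ n` is constant -/
lemma eq_C_of_mul_pow (μ : R2) (n : ℕ) (htd : (μ * X 0 ^ n).totalDegree ≤ n) :
    μ = C (coeff 0 μ) := by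
  have key : ∀ m ∈ μ.support, m = 0 := by
    intro m hm
    have hco : coeff (m + Finsupp.single 0 n) (μ * X 0 ^ n) = coeff m μ := by
      clear htd
      induction n with
      | zero => simp
      | succ k ih =>
        have : m + Finsupp.single 0 (k+1) = (m + Finsupp.single 0 k) + Finsupp.single 0 1 := by
          rw [add_assoc, ← Finsupp.single_add]
      
        rw [this, pow_succ, ← mul_assoc, coeff_mul_X, ih]
    have hmem : (m + Finsupp.single 0 n) ∈ (μ * X 0 ^ n).support := by
      rw [mem_support_iff, hco]
      exact mem_support_iff.mp hm
    have hle := le_totalDegree hmem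
    have hsum : ((m + Finsupp.single 0 n).sum fun _ e => e)
        = (m.sum fun _ e => e) + n := by
      rw [Finsupp.sum_add_index' (fun _ => rfl) (fun _ _ _ => rfl)]
      simp
    have hms : (m.sum fun _ e => e) = 0 := by omega
    ext x
    by_contra hx
    have hx' : 0 < m x := Nat.pos_of_ne_zero (by simpa using hx)
    have hxs : x ∈ m.support := Finsupp.mem_support_iff.mpr (by omega)
    have : m x ≤ m.sum fun _ e => e := by
      rw [Finsupp.sum]
      exact Finset.single_le_sum (fun _ _ => Nat.zero_le _) hxs
    omega
  ext m
  rw [coeff_C]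
  split_ifs with h0
  · rw [← h0]
  · by_cases hm : m ∈ μ.support
    · exact absurd (key m hm).symm h0
    · rw [notMem_support_iff.mp hm]

end Syz
end Part4
section Part5
open MvPolynomial Finset

local notation "R2" => MvPolynomial (Fin 2) ℝ

namespace Syz

noncomputable def t1 (n : ℕ) : Fin 3 → R2 :=
  ![sA (n/2) (n-1-n/2) (n/2), -(sB (n/2) (n-1-n/2) (n/2)), sC (n/2) (n-1-n/2) (n/2)]

noncomputable def t2 (n : ℕ) : Fin 3 → R2 :=
  ![sA (n/2-1) (n-n/2) (n-n/2), -(sB (n/2-1) (n-n/2) (n-n/2)), sC (n/2-1) (n-n/2) (n-n/2)]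

lemma t1_syz (n : ℕ) (hn : 2 ≤ n) :
    t1 n 0 * X 0 ^ n + t1 n 1 * (X 0 + X 1)^n + t1 n 2 * X 1^n = 0 := by
  have h := syz (n/2) (n-1-n/2) (n/2) (le_refl _) (by omega)
  have hpq : (n/2) + (n-1-n/2) + 1 = n := by omega
  rw [hpq] at h
  show sA (n/2) (n-1-n/2) (n/2) * X 0 ^ n + (-(sB (n/2) (n-1-n/2) (n/2))) * (X 0 + X 1)^n
      + sC (n/2) (n-1-n/2) (n/2) * X 1^n = 0
  linear_combination -h

lemma t2_syz (n : ℕ) (hn : 2 ≤ n) :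
    t2 n 0 * X 0 ^ n + t2 n 1 * (X 0 + X 1)^n + t2 n 2 * X 1^n = 0 := by
  have h := syz (n/2-1) (n-n/2) (n-n/2) (by omega) (le_refl _)
  have hpq : (n/2-1) + (n-n/2) + 1 = n := by omega
  rw [hpq] at h
  show sA (n/2-1) (n-n/2) (n-n/2) * X 0 ^ n + (-(sB (n/2-1) (n-n/2) (n-n/2))) * (X 0 + X 1)^n
      + sC (n/2-1) (n-n/2) (n-n/2) * X 1^n = 0
  linear_combination -h

lemma t1_td (n : ℕ) (hn : 2 ≤ n) : ∀ i, (t1 n i).totalDegree ≤ n/2 := by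
  intro i
  fin_cases i
  · exact td_sA _ _ _ (by omega)
  · show (-(sB (n/2) (n-1-n/2) (n/2))).totalDegree ≤ n/2
    rw [totalDegree_neg]
    exact td_sB _ _ _ (by omega)
  · exact td_sC _ _ _ (le_refl _)

lemma t2_td (n : ℕ) (hn : 2 ≤ n) : ∀ i, (t2 n i).totalDegree ≤ n - n/2 := by
  intro i
  fin_cases i
  · exact td_sA _ _ _ (le_refl _)
  · show (-(sB (n/2-1) (n-n/2) (n-n/2))).totalDegree ≤ n - n/2
    rw [totalDegree_neg]
    exact td_sB _ _ _ (le_refl _)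
  · exact td_sC _ _ _ (by omega)

lemma delta1_ne (n : ℕ) (hn : 2 ≤ n) :
    t1 n 1 * t2 n 2 - t1 n 2 * t2 n 1 ≠ 0 := by
  intro hcon
  have hev := congrArg (eval pt) hcon
  have e11 : t1 n 1 = -(sB (n/2) (n-1-n/2) (n/2)) := rfl
  have e12 : t1 n 2 = sC (n/2) (n-1-n/2) (n/2) := rfl
  have e21 : t2 n 1 = -(sB (n/2-1) (n-n/2) (n-n/2)) := rfl
  have e22 : t2 n 2 = sC (n/2-1) (n-n/2) (n-n/2) := rfl
  rw [e11, e12, e21, e22] at hev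
  rw [map_sub, map_mul, map_mul, map_neg, map_neg] at hev
  rw [ev_sC_zero _ _ _ (by omega), ev_sC_p, ev_sB_q] at hev
  simp only [map_zero, mul_zero, neg_zero, zero_sub, neg_eq_zero, mul_neg, neg_neg] at hev
  have h1 : (0:ℝ) < ((n/2 + 2*(n-1-n/2) + 1).choose (n/2) : ℝ) := by
    have := Nat.choose_pos (show n/2 ≤ n/2 + 2*(n-1-n/2) + 1 by omega)
    exact_mod_cast this
  have h2 : (0:ℝ) < ((2*(n-n/2)).choose (n-n/2) : ℝ) := by
    have := Nat.choose_pos (show n-n/2 ≤ 2*(n-n/2) by omega)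
    exact_mod_cast this
  have h3 : ((-1:ℝ))^(n-n/2) ≠ 0 := pow_ne_zero _ (by norm_num)
  have := mul_ne_zero (mul_ne_zero (ne_of_gt h1) h3) (ne_of_gt h2)
  exact this (by linarith [hev])

end Syz
end Part5
section Part6
open MvPolynomial Finset

local notation "R2" => MvPolynomial (Fin 2) ℝ

namespace Syz

lemma primeX1 : Prime (X 1 : R2) := by
  have h0 : Prime (X 0 : R2) := by
    rw [← MulEquiv.prime_iff (MvPolynomial.finSuccEquiv ℝ 1).toMulEquiv]
    have : (MvPolynomial.finSuccEquiv ℝ 1).toMulEquiv (X 0 : R2) = Polynomial.X := by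
      show (MvPolynomial.finSuccEquiv ℝ 1) (X 0 : R2) = Polynomial.X
      rw [finSuccEquiv_X_zero]
    rw [this]
    exact Polynomial.prime_X
  rw [← MulEquiv.prime_iff (renameEquiv ℝ (Equiv.swap (0:Fin 2) 1)).toMulEquiv]
  have : (renameEquiv ℝ (Equiv.swap (0:Fin 2) 1)).toMulEquiv (X 1 : R2) = (X 0 : R2) := by
    show (renameEquiv ℝ (Equiv.swap (0:Fin 2) 1)) (X 1 : R2) = (X 0 : R2)
    rw [renameEquiv_apply, rename_X, Equiv.swap_apply_right]
  rw [this]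
  exact h0

lemma X1_not_dvd_X0 : ¬ (X 1 : R2) ∣ X 0 := by
  rintro ⟨c, hc⟩
  have hev := congrArg (eval pt) hc
  rw [map_mul, eval_X, eval_X, pt_zero, pt_one, zero_mul] at hev
  exact one_ne_zero hev

lemma X1_not_dvd_X0_pow (n : ℕ) : ¬ (X 1 : R2) ∣ (X 0)^n :=
  fun hd => X1_not_dvd_X0 (primeX1.dvd_of_dvd_pow hd)

theorem main (n : ℕ) (hn : 2 ≤ n) :
    (∀ t : Fin 3 → R2, t 0 * X 0^n + t 1 * (X 0+X 1)^n + t 2 * X 1^n = 0 →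
      ∃ a b : R2, ∀ i, t i = a * t1 n i + b * t2 n i) ∧
    (∀ u v : R2, (∀ i, u * t1 n i + v * t2 n i = 0) → u = 0 ∧ v = 0) := by
  have hs1 := t1_syz n hn
  have hs2 := t2_syz n hn
  have hΔ1ne := delta1_ne n hn
  set D1 : R2 := t1 n 1 * t2 n 2 - t1 n 2 * t2 n 1 with hD1def
  set D3 : R2 := t1 n 0 * t2 n 1 - t1 n 1 * t2 n 0 with hD3def
  have hX0n : (X 0 : R2)^n ≠ 0 := pow_ne_zero _ (X_ne_zero _)
  have hX1n : (X 1 : R2)^n ≠ 0 := pow_ne_zero _ (X_ne_zero _)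
  have rel : X 0^n * D3 = X 1^n * D1 := by
    rw [hD1def, hD3def]
    linear_combination (t2 n 1) * hs1 - (t1 n 1) * hs2
  obtain ⟨μ, hμ⟩ : (X 1 : R2)^n ∣ D3 :=
    Prime.pow_dvd_of_dvd_mul_left primeX1 n (X1_not_dvd_X0_pow n) ⟨D1, rel⟩
  have hΔ1eq : D1 = X 0^n * μ := by
    apply mul_left_cancel₀ hX1n
    linear_combination X 0 ^ n * hμ - rel
  have hμne : μ ≠ 0 := by
    rintro rfl
    rw [mul_zero] at hΔ1eq
    exact hΔ1ne hΔ1eq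
  have htd1 := t1_td n hn
  have htd2 := t2_td n hn
  have htdΔ1 : D1.totalDegree ≤ n := by
    rw [hD1def]
    refine (totalDegree_sub _ _).trans ?_
    have hb1 : (t1 n 1 * t2 n 2).totalDegree ≤ n := by
      refine (totalDegree_mul _ _).trans ?_
      have := htd1 1; have := htd2 2; omega
    have hb2 : (t1 n 2 * t2 n 1).totalDegree ≤ n := by
      refine (totalDegree_mul _ _).trans ?_
      have := htd1 2; have := htd2 1; omega
    omega
  have hμC : μ = C (coeff 0 μ) := by
    apply eq_C_of_mul_pow μ n
    have : μ * X 0 ^ n = D1 := by rw [hΔ1eq]; ring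
    rw [this]
    exact htdΔ1
  set c : ℝ := coeff 0 μ with hcdef
  have hcne : c ≠ 0 := by
    intro h
    apply hμne
    rw [hμC, h, map_zero]
  have hD3ne : D3 ≠ 0 := by
    rw [hμ]
    exact mul_ne_zero hX1n hμne
  have indep : ∀ u v : R2, (∀ i, u * t1 n i + v * t2 n i = 0) → u = 0 ∧ v = 0 := by
    intro u v huv
    have h0 := huv 0
    have h1 := huv 1
    have hu : u * D3 = 0 := by
      rw [hD3def]
      linear_combination t2 n 1 * h0 - t2 n 0 * h1
    have hu0 : u = 0 := by
      rcases mul_eq_zero.mp hu with h | h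
      · exact h
      · exact absurd h hD3ne
    refine ⟨hu0, ?_⟩
    have h1' := huv 1
    rw [hu0, zero_mul, zero_add] at h1'
    have ht21ne : t2 n 1 ≠ 0 := by
      intro hcon
      have hev := congrArg (eval pt) hcon
      have e21 : t2 n 1 = -(sB (n/2-1) (n-n/2) (n-n/2)) := rfl
      rw [e21, map_neg, ev_sB_q, map_zero, neg_eq_zero] at hev
      have h2 : (0:ℝ) < ((2*(n-n/2)).choose (n-n/2) : ℝ) := by
        have := Nat.choose_pos (show n-n/2 ≤ 2*(n-n/2) by omega)
        exact_mod_cast this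
      have h3 : ((-1:ℝ))^(n-n/2) ≠ 0 := pow_ne_zero _ (by norm_num)
      exact (mul_ne_zero h3 (ne_of_gt h2)) hev
    rcases mul_eq_zero.mp h1' with h | h
    · exact h
    · exact absurd h ht21ne
  refine ⟨?_, indep⟩
  intro t ht
  set P : R2 := t 0 * t2 n 1 - t2 n 0 * t 1 with hPdef
  set Q : R2 := t1 n 0 * t 1 - t 0 * t1 n 1 with hQdef
  have E0 : D3 * t 0 = P * t1 n 0 + Q * t2 n 0 := by rw [hD3def, hPdef, hQdef]; ring
  have E1 : D3 * t 1 = P * t1 n 1 + Q * t2 n 1 := by rw [hD3def, hPdef, hQdef]; ring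
  have E2 : D3 * t 2 = P * t1 n 2 + Q * t2 n 2 := by
    apply mul_left_cancel₀ hX1n
    linear_combination D3 * ht - P * hs1 - Q * hs2 - X 0 ^ n * E0 - (X 0 + X 1)^n * E1
  set P' : R2 := t 1 * t2 n 2 - t2 n 1 * t 2 with hP'def
  set Q' : R2 := t1 n 1 * t 2 - t 1 * t1 n 2 with hQ'def
  have E1' : D1 * t 1 = P' * t1 n 1 + Q' * t2 n 1 := by rw [hD1def, hP'def, hQ'def]; ring
  have E2' : D1 * t 2 = P' * t1 n 2 + Q' * t2 n 2 := by rw [hD1def, hP'def, hQ'def]; ring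
  have E0' : D1 * t 0 = P' * t1 n 0 + Q' * t2 n 0 := by
    apply mul_left_cancel₀ hX0n
    linear_combination D1 * ht - P' * hs1 - Q' * hs2 - (X 0 + X 1)^n * E1' - X 1 ^ n * E2'
  have K : ∀ i, (X 0^n * P - X 1^n * P') * t1 n i + (X 0^n * Q - X 1^n * Q') * t2 n i = 0 := by
    intro i
    fin_cases i
    · show (X 0^n * P - X 1^n * P') * t1 n 0 + (X 0^n * Q - X 1^n * Q') * t2 n 0 = 0
      linear_combination t 0 * rel - X 0 ^ n * E0 + X 1 ^ n * E0'
    · show (X 0^n * P - X 1^n * P') * t1 n 1 + (X 0^n * Q - X 1^n * Q') * t2 n 1 = 0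
      linear_combination t 1 * rel - X 0 ^ n * E1 + X 1 ^ n * E1'
    · show (X 0^n * P - X 1^n * P') * t1 n 2 + (X 0^n * Q - X 1^n * Q') * t2 n 2 = 0
      linear_combination t 2 * rel - X 0 ^ n * E2 + X 1 ^ n * E2'
  obtain ⟨hKP, hKQ⟩ := indep _ _ K
  obtain ⟨P₀, hP₀⟩ : (X 1 : R2)^n ∣ P :=
    Prime.pow_dvd_of_dvd_mul_left primeX1 n (X1_not_dvd_X0_pow n)
      ⟨P', by linear_combination hKP⟩
  obtain ⟨Q₀, hQ₀⟩ : (X 1 : R2)^n ∣ Q :=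
    Prime.pow_dvd_of_dvd_mul_left primeX1 n (X1_not_dvd_X0_pow n)
      ⟨Q', by linear_combination hKQ⟩
  refine ⟨C c⁻¹ * P₀, C c⁻¹ * Q₀, ?_⟩
  intro i
  have hmu : μ * t i = P₀ * t1 n i + Q₀ * t2 n i := by
    apply mul_left_cancel₀ hX1n
    have hE : D3 * t i = P * t1 n i + Q * t2 n i := by
      fin_cases i
      · exact E0
      · exact E1
      · exact E2
    linear_combination hE - t i * hμ + t1 n i * hP₀ + t2 n i * hQ₀
  have hCc : (C c⁻¹ : R2) * μ = 1 := by
    rw [hμC, ← map_mul, inv_mul_cancel₀ hcne, map_one]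
  calc t i = (C c⁻¹ * μ) * t i := by rw [hCc, one_mul]
    _ = C c⁻¹ * (P₀ * t1 n i + Q₀ * t2 n i) := by rw [mul_assoc, hmu]
    _ = (C c⁻¹ * P₀) * t1 n i + (C c⁻¹ * Q₀) * t2 n i := by ring

end Syz
end Part6


section Part7
open MvPolynomial

local notation "R2" => MvPolynomial (Fin 2) ℝ

/-- For `r ≥ 1`, the kernel of the `ℝ[x,y]`-module homomorphism
`φ : ℝ[x,y]³ → ℝ[x,y]` sending the standard basis vectors to `x^(r+1)`,
`(x+y)^(r+1)`, `y^(r+1)` (i.e. the first-syzygy module of the ideal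
`⟨x^(r+1), (x+y)^(r+1), y^(r+1)⟩`) is a free `ℝ[x,y]`-module of rank `2`. -/
theorem syzygy_module_free_rank_two (r : ℕ) (hr : 1 ≤ r) :
    Module.Free (MvPolynomial (Fin 2) ℝ) ↥(LinearMap.ker (phi r)) ∧
      Module.rank (MvPolynomial (Fin 2) ℝ) ↥(LinearMap.ker (phi r)) = 2 := by
  have hn : 2 ≤ r + 1 := by omega
  obtain ⟨span_prop, indep_prop⟩ := Syz.main (r+1) hn
  have mem1 : Syz.t1 (r+1) ∈ LinearMap.ker (phi r) := by
    rw [LinearMap.mem_ker]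
    exact Syz.t1_syz (r+1) hn
  have mem2 : Syz.t2 (r+1) ∈ LinearMap.ker (phi r) := by
    rw [LinearMap.mem_ker]
    exact Syz.t2_syz (r+1) hn
  set K := LinearMap.ker (phi r) with hK
  let v1 : K := ⟨Syz.t1 (r+1), mem1⟩
  let v2 : K := ⟨Syz.t2 (r+1), mem2⟩
  have hli : LinearIndependent R2 ![v1, v2] := by
    rw [Fintype.linearIndependent_iff]
    intro g hg
    rw [Fin.sum_univ_two] at hg
    have hg' : g 0 • Syz.t1 (r+1) + g 1 • Syz.t2 (r+1) = 0 := by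
      have := congrArg (Subtype.val) hg
      simpa using this
    have hcomp : ∀ i, g 0 * Syz.t1 (r+1) i + g 1 * Syz.t2 (r+1) i = 0 := by
      intro i
      have := congrFun hg' i
      simpa [Pi.smul_apply, smul_eq_mul] using this
    obtain ⟨h0, h1⟩ := indep_prop _ _ hcomp
    intro i
    fin_cases i
    · exact h0
    · exact h1
  have hspan : ⊤ ≤ Submodule.span R2 (Set.range ![v1, v2]) := by
    intro x _
    have hx : (x : Fin 3 → R2) 0 * X 0^(r+1) + (x : Fin 3 → R2) 1 * (X 0+X 1)^(r+1)
        + (x : Fin 3 → R2) 2 * X 1^(r+1) = 0 := x.2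
    obtain ⟨a, b, hab⟩ := span_prop _ hx
    have hx2 : x = a • v1 + b • v2 := by
      apply Subtype.ext
      funext i
      have : ((a • v1 + b • v2 : K) : Fin 3 → R2) i
          = a * Syz.t1 (r+1) i + b * Syz.t2 (r+1) i := by
        simp [v1, v2, Pi.smul_apply, smul_eq_mul]
      rw [this]
      exact hab i
    rw [hx2]
    apply Submodule.add_mem
    · exact Submodule.smul_mem _ _ (Submodule.subset_span ⟨0, rfl⟩)
    · exact Submodule.smul_mem _ _ (Submodule.subset_span ⟨1, rfl⟩)
  let bas : Module.Basis (Fin 2) R2 K := Module.Basis.mk hli hspan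
  constructor
  · exact Module.Free.of_basis bas
  · rw [← bas.mk_eq_rank'']
    simp
end Part7
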